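/- Let P be an even positive integer and Q an odd positive integer with gcd(P,Q) = 1 and P/3 < Q < P/2. If P/Q = 2 + 1/(α + 1/(β_1 + 1/(... + 1/β_k))) (as a continued fraction with nonzero integer entries), then P/(P-Q) = 2 + 1/(-(α+1) + 1/(-β_1 + 1/(... + 1/(-β_k)))). -/

import Mathlib

/-- Value of a continued fraction `[a₁, …, aₙ] = a₁ + 1/(a₂ + 1/(⋯ + 1/aₙ))`,
evaluated in `ℚ` (with the convention `cfVal [] = 0`, so `cfVal [a] = a`). -/
def cfVal : List ℤ → ℚ
  | [] => 0
  | a :: l => a + (cfVal l)⁻¹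

lemma cfVal_neg (l : List ℤ) : cfVal (l.map (fun b => -b)) = - cfVal l := by
  induction l with
  | nil => simp [cfVal]
  | cons a l ih =>
    simp only [List.map_cons, cfVal, ih, inv_neg, Int.cast_neg]
    ring

/-- Case P/3 < Q < P/2: if P/Q = [2, α, β₁, …, β_k] then
P/(P-Q) = [2, -(α+1), -β₁, …, -β_k]. -/
theorem complement_expansion_large_Q (P Q : ℤ) (hP : Even P) (hP0 : 0 < P)
    (hQ : Odd Q) (hQ0 : 0 < Q) (hco : IsCoprime P Q)
    (h3 : P < 3 * Q) (h2 : 2 * Q < P)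
    (α : ℤ) (β : List ℤ) (hα : α ≠ 0) (hβ : ∀ b ∈ β, b ≠ 0)
    (h : cfVal (2 :: α :: β) = (P : ℚ) / Q) :
    cfVal (2 :: (-(α + 1)) :: β.map (fun b => -b)) = (P : ℚ) / (P - Q) := by
  have hQne : (Q : ℚ) ≠ 0 := by positivity
  have hPQ2 : (P : ℚ) - 2 * Q ≠ 0 := by
    have : (2 * Q : ℚ) < P := by exact_mod_cast h2
    linarith
  have hPQ : (P : ℚ) - Q ≠ 0 := by
    have h1 : (Q : ℚ) > 0 := by positivity
    have : (2 * Q : ℚ) < P := by exact_mod_cast h2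
    linarith
  set x : ℚ := (α : ℚ) + (cfVal β)⁻¹ with hx
  have hh : (2 : ℚ) + x⁻¹ = (P : ℚ) / Q := by
    simpa [cfVal] using h
  have hxinv : x⁻¹ = ((P : ℚ) - 2 * Q) / Q := by
    have h1 : x⁻¹ = (P : ℚ) / Q - 2 := by linarith
    rw [h1]; field_simp
  have hxne : x ≠ 0 := by
    intro h0
    rw [h0, inv_zero] at hxinv
    exact hPQ2 (by field_simp at hxinv; linarith)
  have hxval : x = (Q : ℚ) / ((P : ℚ) - 2 * Q) := by
    have := congrArg (·⁻¹) hxinv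
    simpa [inv_inv, inv_div] using this
  show (2 : ℚ) + (((-(α + 1) : ℤ) : ℚ) + (cfVal (β.map (fun b => -b)))⁻¹)⁻¹ = (P : ℚ) / (P - Q)
  rw [cfVal_neg, inv_neg]
  have hstep : ((-(α + 1) : ℤ) : ℚ) + -(cfVal β)⁻¹ = -x - 1 := by
    push_cast
    rw [hx]; ring
  rw [hstep, hxval]
  have key : -((Q : ℚ) / ((P : ℚ) - 2 * Q)) - 1 = -(((P : ℚ) - Q) / ((P : ℚ) - 2 * Q)) := by
    rw [show ((P : ℚ) - Q) = Q + (P - 2 * Q) by ring, add_div, div_self hPQ2]; ring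
  rw [key, inv_neg, inv_div]
  field_simp
  ring
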